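/- arXiv:1710.03596 — 2 statements merged into one kernel-verified Lean document; each statement's English description precedes it below -/
import Mathlib

section
/- Let b > 1, v > 1, ε > 0 with v − ε > 1, and (y_n) a sequence in [0,1]. Then the Hausdorff dimension of { x ∈ [v−ε, v+ε] : ‖x^n − y_n‖ < b^{−n} for infinitely many n } is at most (log(v+ε))/(log(b(v−ε))). -/
open Filter MeasureTheory Topology Set
open scoped ENNReal NNReal

/-- Distance to the nearest integer. -/
noncomputable def distNearestInt (x : ℝ) : ℝ := |x - round x|

private lemma aux_pow_sub (c u w : ℝ) (hc : 1 ≤ c) (hw : c ≤ w) (hwu : w ≤ u) {n : ℕ}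
    (hn : 1 ≤ n) : c ^ (n - 1) * (u - w) ≤ u ^ n - w ^ n := by
  have hc0 : (0:ℝ) ≤ c := by linarith
  have hcu : c ≤ u := hw.trans hwu
  rw [← geom_sum₂_mul]
  have key : (c:ℝ) ^ (n - 1) ≤ ∑ i ∈ Finset.range n, u ^ i * w ^ (n - 1 - i) := by
    have h1 : ∀ i ∈ Finset.range n, c ^ (n - 1) ≤ u ^ i * w ^ (n - 1 - i) := by
      intro i hi
      have hin : i + (n - 1 - i) = n - 1 := by
        have := Finset.mem_range.mp hi; omega
      calc c ^ (n - 1) = c ^ i * c ^ (n - 1 - i) := by rw [← pow_add, hin]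
        _ ≤ u ^ i * w ^ (n - 1 - i) :=
          mul_le_mul (pow_le_pow_left₀ hc0 hcu i) (pow_le_pow_left₀ hc0 hw _)
            (pow_nonneg hc0 _) (pow_nonneg (hc0.trans hcu) _)
    have h2 := Finset.card_nsmul_le_sum (Finset.range n) _ _ h1
    rw [Finset.card_range, nsmul_eq_mul] at h2
    calc c ^ (n-1) = 1 * c ^ (n-1) := (one_mul _).symm
      _ ≤ (n:ℝ) * c ^ (n-1) := by
          apply mul_le_mul_of_nonneg_right _ (pow_nonneg hc0 _)
          exact_mod_cast hn
      _ ≤ _ := h2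
  exact mul_le_mul_of_nonneg_right key (by linarith)

set_option maxHeartbeats 2000000 in
theorem stmt3 (b : ℝ) (hb : 1 < b) (v ε : ℝ) (hv : 1 < v) (hε : 0 < ε) (hvε : 1 < v - ε)
    (y : ℕ → ℝ) (hy : ∀ n, y n ∈ Set.Icc (0:ℝ) 1) :
    dimH {x : ℝ | x ∈ Set.Icc (v - ε) (v + ε) ∧
        ∃ᶠ n : ℕ in atTop, distNearestInt (x ^ n - y n) < (b ^ n)⁻¹} ≤
      ENNReal.ofReal (Real.log (v + ε) / Real.log (b * (v - ε))) := by
  set c := v - ε with hcdef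
  set dd := v + ε with hdddef
  have hc1 : 1 < c := hvε
  have hc0 : (0:ℝ) < c := by linarith
  have hd1 : 1 < dd := by simp only [hdddef]; linarith
  have hd0 : (0:ℝ) < dd := by linarith
  have hcd : c ≤ dd := by simp only [hcdef, hdddef]; linarith
  have hb0 : (0:ℝ) < b := by linarith
  have hbc1 : 1 < b * c := by nlinarith
  have hbc0 : (0:ℝ) < b * c := by linarith
  have hlogbc : 0 < Real.log (b * c) := Real.log_pos hbc1
  have hlogd : 0 < Real.log dd := Real.log_pos hd1
  set E := {x : ℝ | x ∈ Set.Icc c dd ∧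
      ∃ᶠ n : ℕ in atTop, distNearestInt (x ^ n - y n) < (b ^ n)⁻¹} with hE
  set B := Real.log dd / Real.log (b * c) with hB
  have hB0 : 0 < B := div_pos hlogd hlogbc
  refine dimH_le fun s hs => ?_
  by_contra hcon
  push_neg at hcon
  -- from hcon : ofReal B < ↑s, extract B < s in ℝ
  have hsB : B < (s:ℝ) := by
    rw [← ENNReal.ofReal_coe_nnreal] at hcon
    exact (ENNReal.ofReal_lt_ofReal_iff_of_nonneg hB0.le).mp hcon
  set s' := (s:ℝ) with hs'
  have hs0 : 0 < s' := hB0.trans hsB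
  -- main claim: μH[s'] E = 0
  suffices hμ : μH[s'] E = 0 by
    rw [hs] at hμ; exact (ENNReal.top_ne_zero) hμ
  set ρ := (b * c)⁻¹ with hρdef
  have hρ0 : 0 < ρ := inv_pos.mpr hbc0
  have hρ1 : ρ < 1 := inv_lt_one_of_one_lt₀ hbc1
  set w := ρ ^ s' with hwdef
  have hw0 : 0 < w := Real.rpow_pos_of_pos hρ0 _
  have hw1 : w < 1 := Real.rpow_lt_one hρ0.le hρ1 hs0
  have hdw : dd * w < 1 := by
    have h1 : Real.log dd < s' * Real.log (b * c) := (div_lt_iff₀ hlogbc).mp hsB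
    have h2 : dd < (b * c) ^ s' := (Real.lt_rpow_iff_log_lt hd0 hbc0).mpr h1
    have hw_eq : w = ((b * c) ^ s')⁻¹ := by
      rw [hwdef, hρdef, Real.inv_rpow hbc0.le]
    rw [hw_eq, mul_inv_lt_iff₀ (Real.rpow_pos_of_pos hbc0 _), one_mul]
    exact h2
  -- the basic intervals
  set S : ℕ → ℤ → Set ℝ :=
    fun n k => {x : ℝ | x ∈ Set.Icc c dd ∧ |x ^ n - ((k:ℝ) + y n)| < (b ^ n)⁻¹} with hS
  set M : ℕ → ℤ := fun n => ⌊dd ^ n⌋ + 1 with hM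
  set t : ℕ → ℕ × ℤ → Set ℝ := fun N p =>
    if N ≤ p.1 ∧ 1 ≤ p.1 ∧ 0 ≤ p.2 ∧ p.2 ≤ M p.1 then S p.1 p.2 else ∅ with ht
  -- diameter bound
  have hLpos : ∀ n : ℕ, 0 < 2 * c * ρ ^ n := fun n => by positivity
  have diamS : ∀ n : ℕ, 1 ≤ n → ∀ k : ℤ,
      EMetric.diam (S n k) ≤ ENNReal.ofReal (2 * c * ρ ^ n) := by
    intro n hn k
    apply EMetric.diam_le
    intro x hx x' hx'
    rw [edist_dist]
    apply ENNReal.ofReal_le_ofReal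
    -- |x - x'| ≤ 2 c ρ^n
    have key : ∀ u u' : ℝ, u ∈ S n k → u' ∈ S n k → u' ≤ u → u - u' ≤ 2 * c * ρ ^ n := by
      intro u u' hu hu' huu
      obtain ⟨⟨huc, hud⟩, hun⟩ := hu
      obtain ⟨⟨hu'c, _⟩, hu'n⟩ := hu'
      have h1 : c ^ (n - 1) * (u - u') ≤ u ^ n - u' ^ n :=
        aux_pow_sub c u u' hc1.le hu'c huu hn
      have h2 : u ^ n - u' ^ n < 2 * (b ^ n)⁻¹ := by
        have := abs_lt.mp hun
        have := abs_lt.mp hu'n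
        linarith [this.1, this.2]
      have hcn : (0:ℝ) < c ^ (n - 1) := pow_pos hc0 _
      have h3 : u - u' ≤ 2 * (b ^ n)⁻¹ / c ^ (n - 1) := by
        rw [le_div_iff₀ hcn]; nlinarith
      refine h3.trans (le_of_eq ?_)
      have hcne : c ^ (n-1) ≠ 0 := hcn.ne'
      have hbne : (b:ℝ) ^ n ≠ 0 := (pow_pos hb0 n).ne'
      have hcn' : c ^ n = c ^ (n-1) * c := by
        rw [← pow_succ]; congr 1; omega
      rw [hρdef, inv_pow, mul_pow, div_eq_iff hcne]
      field_simp
      nlinarith [pow_pos hb0 n, pow_pos hc0 (n-1)]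
    rcases le_total x' x with h | h
    · rw [Real.dist_eq, abs_of_nonneg (by linarith)]; exact key x x' hx hx' h
    · rw [Real.dist_eq, abs_of_nonpos (by linarith)]
      have := key x' x hx' hx h; linarith
  -- covering property
  have cover : ∀ N : ℕ, E ⊆ ⋃ p : ℕ × ℤ, t N p := by
    intro N x hx
    obtain ⟨hxI, hfreq⟩ := hx
    obtain ⟨n, hnN, hdist⟩ := (frequently_atTop.mp hfreq) (max N 1)
    have hn1 : 1 ≤ n := le_trans (le_max_right _ _) hnN
    have hnN' : N ≤ n := le_trans (le_max_left _ _) hnN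
    set k : ℤ := round (x ^ n - y n) with hk
    have hxk : |x ^ n - ((k:ℝ) + y n)| < (b ^ n)⁻¹ := by
      have : x ^ n - ((k:ℝ) + y n) = (x ^ n - y n) - k := by ring
      rw [this]; exact hdist
    have hxc : c ≤ x := hxI.1
    have hxd : x ≤ dd := hxI.2
    have hx0 : (0:ℝ) ≤ x := by linarith
    have hbn1 : (1:ℝ) ≤ b ^ n := one_le_pow₀ hb.le
    have hbninv : (b ^ n)⁻¹ ≤ 1 := inv_le_one_of_one_le₀ hbn1
    have hxnd : x ^ n ≤ dd ^ n := pow_le_pow_left₀ hx0 hxd n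
    have hxnc : c ≤ x ^ n := by
      calc c = c ^ 1 := (pow_one c).symm
        _ ≤ c ^ n := pow_le_pow_right₀ hc1.le hn1
        _ ≤ x ^ n := pow_le_pow_left₀ hc0.le hxc n
    have habs := abs_lt.mp hxk
    have hy0 := (hy n).1
    have hy1 := (hy n).2
    have hk0 : 0 ≤ k := by
      have h1 : (-1:ℝ) < (k:ℝ) := by
        have hbninv' : (b ^ n)⁻¹ < 1 + c := by linarith
        nlinarith [habs.2]
      have h2 : (-1:ℤ) < k := by exact_mod_cast h1
      omega
    have hkM : k ≤ M n := by
      have h1 : (k:ℝ) < dd ^ n + 1 := by nlinarith [habs.1]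
      have : (k:ℝ) - 1 < dd ^ n := by linarith
      have h2 : k - 1 ≤ ⌊dd ^ n⌋ := Int.le_floor.mpr (by push_cast; linarith)
      simp only [hM]; omega
    refine Set.mem_iUnion.mpr ⟨(n, k), ?_⟩
    simp only [ht]
    rw [if_pos ⟨hnN', hn1, hk0, hkM⟩]
    exact ⟨⟨hxc, hxd⟩, hxk⟩
  -- the dominating sequence
  set g : ℕ → ℝ≥0∞ := fun n => ENNReal.ofReal ((dd ^ n + 2) * ((2*c) ^ s' * w ^ n)) with hg
  have hgsum : ∑' n, g n ≠ ⊤ := by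
    have hnonneg : ∀ n : ℕ, 0 ≤ (dd ^ n + 2) * ((2*c) ^ s' * w ^ n) := by
      intro n; positivity
    have hsummable : Summable (fun n : ℕ => (dd ^ n + 2) * ((2*c) ^ s' * w ^ n)) := by
      have heq : (fun n : ℕ => (dd ^ n + 2) * ((2*c) ^ s' * w ^ n)) =
          fun n : ℕ => (2*c) ^ s' * ((dd * w) ^ n + 2 * w ^ n) := by
        funext n; rw [mul_pow]; ring
      rw [heq]
      exact (((summable_geometric_of_lt_one (by positivity) hdw)).add
        ((summable_geometric_of_lt_one hw0.le hw1).mul_left 2)).mul_left _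
    rw [hg, ← ENNReal.ofReal_tsum_of_nonneg hnonneg hsummable]
    exact ENNReal.ofReal_ne_top
  -- the key rpow computation
  have hpow_eq : ∀ n : ℕ, (2 * c * ρ ^ n) ^ s' = (2*c) ^ s' * w ^ n := by
    intro n
    rw [Real.mul_rpow (by positivity) (by positivity)]
    congr 1
    rw [hwdef, ← Real.rpow_natCast ρ n, ← Real.rpow_mul hρ0.le, mul_comm,
      Real.rpow_mul hρ0.le, Real.rpow_natCast]
  -- per-n sum bound
  have inner_bound : ∀ N n : ℕ, N ≤ n → 1 ≤ n →
      ∑' k : ℤ, EMetric.diam (t N (n, k)) ^ s' ≤ g n := by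
    intro N n hNn hn1
    have hsupp : ∀ k : ℤ, k ∉ Finset.Icc (0:ℤ) (M n) →
        EMetric.diam (t N (n, k)) ^ s' = 0 := by
      intro k hk
      rw [Finset.mem_Icc] at hk
      have : t N (n, k) = ∅ := by
        simp only [ht]; rw [if_neg]; intro ⟨_, _, h1, h2⟩; exact hk ⟨h1, h2⟩
      rw [this, (by exact Metric.ediam_empty : EMetric.diam (∅ : Set ℝ) = 0), ENNReal.zero_rpow_of_pos hs0]
    rw [tsum_eq_sum hsupp]
    have hterm : ∀ k ∈ Finset.Icc (0:ℤ) (M n),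
        EMetric.diam (t N (n, k)) ^ s' ≤ ENNReal.ofReal ((2 * c * ρ ^ n) ^ s') := by
      intro k _
      rw [← ENNReal.ofReal_rpow_of_pos (hLpos n)]
      apply ENNReal.rpow_le_rpow _ hs0.le
      simp only [ht]
      split
      · exact diamS n hn1 k
      · rw [(by exact Metric.ediam_empty : EMetric.diam (∅ : Set ℝ) = 0)]; exact zero_le
    calc ∑ k ∈ Finset.Icc (0:ℤ) (M n), EMetric.diam (t N (n, k)) ^ s'
        ≤ (Finset.Icc (0:ℤ) (M n)).card • ENNReal.ofReal ((2 * c * ρ ^ n) ^ s') :=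
          Finset.sum_le_card_nsmul _ _ _ hterm
      _ ≤ g n := by
          rw [nsmul_eq_mul]
          have hcard : ((Finset.Icc (0:ℤ) (M n)).card : ℝ) ≤ dd ^ n + 2 := by
            rw [Int.card_Icc]
            have hM1 : (1:ℤ) ≤ M n := by
              simp only [hM]
              have : (0:ℤ) ≤ ⌊dd ^ n⌋ := Int.le_floor.mpr (by push_cast; positivity)
              omega
            have hfl : (⌊dd ^ n⌋ : ℝ) ≤ dd ^ n := Int.floor_le _
            have ht2 : ((M n + 1 - 0).toNat : ℤ) = M n + 1 := by omega
            have h2 : (((M n + 1 - 0).toNat : ℤ) : ℝ) = ((M n : ℝ) + 1) := by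
              rw [ht2]; push_cast; ring
            push_cast at h2 ⊢
            rw [h2]
            simp only [hM]; push_cast; linarith
          rw [hg, hpow_eq n]
          rw [← ENNReal.ofReal_natCast, ← ENNReal.ofReal_mul (by positivity)]
          exact ENNReal.ofReal_le_ofReal
            (mul_le_mul_of_nonneg_right hcard (by positivity))
  -- total sum bound
  have total_bound : ∀ N : ℕ, 1 ≤ N →
      ∑' p : ℕ × ℤ, EMetric.diam (t N p) ^ s' ≤ ∑' i, g (i + N) := by
    intro N hN1
    rw [ENNReal.tsum_prod']
    have hzero : ∀ n : ℕ, n < N → ∑' k : ℤ, EMetric.diam (t N (n, k)) ^ s' = 0 := by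
      intro n hn
      have : ∀ k : ℤ, EMetric.diam (t N (n, k)) ^ s' = 0 := by
        intro k
        have : t N (n, k) = ∅ := by
          simp only [ht]; rw [if_neg]; intro ⟨h, _⟩; omega
        rw [this, (by exact Metric.ediam_empty : EMetric.diam (∅ : Set ℝ) = 0), ENNReal.zero_rpow_of_pos hs0]
      simp [this]
    set F : ℕ → ℝ≥0∞ := fun n => ∑' k : ℤ, EMetric.diam (t N (n, k)) ^ s' with hF
    have hsplit : ∑ n ∈ Finset.range N, F n + ∑' i : ℕ, F (i + N) = ∑' n : ℕ, F n :=
      Summable.sum_add_tsum_nat_add' (f := F) (k := N) ENNReal.summable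
    rw [← hsplit]
    have h1 : ∑ n ∈ Finset.range N, F n = 0 :=
      Finset.sum_eq_zero fun n hn => hzero n (Finset.mem_range.mp hn)
    rw [h1, zero_add]
    exact ENNReal.tsum_le_tsum fun i => inner_bound N (i + N) (by omega) (by omega)
  -- conclude via hausdorffMeasure_le_liminf_tsum
  have hr_tendsto : Tendsto (fun N : ℕ => ENNReal.ofReal (2 * c * ρ ^ N)) atTop (𝓝 0) := by
    rw [show (0:ℝ≥0∞) = ENNReal.ofReal 0 by simp]
    apply ENNReal.tendsto_ofReal
    have : Tendsto (fun N : ℕ => ρ ^ N) atTop (𝓝 0) :=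
      tendsto_pow_atTop_nhds_zero_of_lt_one hρ0.le hρ1
    have := this.const_mul (2 * c)
    simpa using this
  have hdiam : ∀ᶠ N : ℕ in atTop, ∀ p : ℕ × ℤ,
      EMetric.diam (t N p) ≤ ENNReal.ofReal (2 * c * ρ ^ N) := by
    filter_upwards with N p
    simp only [ht]
    split
    · rename_i h
      obtain ⟨hNp, hp1, _⟩ := h
      refine (diamS p.1 hp1 p.2).trans (ENNReal.ofReal_le_ofReal ?_)
      have : ρ ^ p.1 ≤ ρ ^ N := pow_le_pow_of_le_one hρ0.le hρ1.le hNp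
      nlinarith
    · rw [(by exact Metric.ediam_empty : EMetric.diam (∅ : Set ℝ) = 0)]; exact zero_le
  have hmain := MeasureTheory.Measure.hausdorffMeasure_le_liminf_tsum s' E
    (fun N : ℕ => ENNReal.ofReal (2 * c * ρ ^ N)) hr_tendsto t hdiam
    (Eventually.of_forall cover)
  have hlim : liminf (fun N : ℕ => ∑' p : ℕ × ℤ, EMetric.diam (t N p) ^ s') atTop = 0 := by
    have htend0 : Tendsto (fun N : ℕ => ∑' i, g (i + N)) atTop (𝓝 0) :=
      ENNReal.tendsto_sum_nat_add g hgsum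
    have h1 : liminf (fun N : ℕ => ∑' p : ℕ × ℤ, EMetric.diam (t N p) ^ s') atTop
        ≤ liminf (fun N : ℕ => ∑' i, g (i + N)) atTop := by
      apply liminf_le_liminf ?_ ?_ ?_
      · filter_upwards [eventually_ge_atTop 1] with N hN
        exact total_bound N hN
      · isBoundedDefault
      · isBoundedDefault
    rw [htend0.liminf_eq] at h1
    exact le_antisymm h1 zero_le
  rw [show liminf (fun n => ∑' (i : ℕ × ℤ), Metric.ediam (t n i) ^ s') atTop = 0 from hlim] at hmain
  exact le_antisymm hmain zero_le
end

section
/- For any ε > 0 and any sequence of real numbers (y_n)_{n≥1}, the set { x > 1 : ‖x^n − y_n‖ < ε for all n ≥ 1 } has Hausdorff dimension 1. -/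
open Filter MeasureTheory Topology Set
open scoped NNReal ENNReal

/-! ## Auxiliary Cantor-set construction -/

/-- Left endpoints of the nested intervals. -/
noncomputable def bmA (y : ℕ → ℝ) (T : ℕ) (σ : ℕ → ℕ) : ℕ → ℝ
  | 0 => T
  | n + 1 => ((⌈(bmA y T σ n) ^ (n + 1) - y (n + 1)⌉ : ℝ) + (σ n : ℝ) + y (n + 1)) ^
      (((n + 1 : ℕ) : ℝ))⁻¹

/-- Right endpoints of the nested intervals (meaningful for `n ≥ 1`). -/
noncomputable def bmB (y : ℕ → ℝ) (e : ℝ) (T : ℕ) (σ : ℕ → ℕ) (n : ℕ) : ℝ :=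
  ((bmA y T σ n) ^ n + e) ^ ((n : ℝ))⁻¹

/-- The limit point of the nested intervals. -/
noncomputable def bmH (y : ℕ → ℝ) (T : ℕ) (σ : ℕ → ℕ) : ℝ := ⨆ n, bmA y T σ n

/-- Base-`N` value of a digit string. -/
noncomputable def bmP (N : ℕ) (σ : ℕ → ℕ) : ℝ := ∑' k, (σ k : ℝ) / (N : ℝ) ^ (k + 1)

section construction

variable {y : ℕ → ℝ} {e : ℝ} {T N : ℕ} {σ σ' : ℕ → ℕ}

lemma bmA_zero : bmA y T σ 0 = T := rfl

lemma bmA_succ (n : ℕ) : bmA y T σ (n + 1) =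
    ((⌈(bmA y T σ n) ^ (n + 1) - y (n + 1)⌉ : ℝ) + (σ n : ℝ) + y (n + 1)) ^
      (((n + 1 : ℕ) : ℝ))⁻¹ := rfl

lemma bm_rhs_ge (x : ℝ) (n j : ℕ) :
    x ^ (n + 1) ≤ (⌈x ^ (n + 1) - y (n + 1)⌉ : ℝ) + (j : ℝ) + y (n + 1) := by
  have h1 := Int.le_ceil (x ^ (n + 1) - y (n + 1))
  have h2 : (0 : ℝ) ≤ j := Nat.cast_nonneg j
  linarith

lemma bmA_ge_T (hT : 1 ≤ T) : ∀ n, (T : ℝ) ≤ bmA y T σ n := by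
  intro n
  induction n with
  | zero => simp [bmA_zero]
  | succ n ih =>
    have hTn : (T : ℝ) ^ (n + 1) ≤ (bmA y T σ n) ^ (n + 1) := by
      have h0 : (0:ℝ) ≤ (T:ℝ) := Nat.cast_nonneg T
      gcongr
    have hR : (bmA y T σ n) ^ (n + 1) ≤
        (⌈(bmA y T σ n) ^ (n + 1) - y (n + 1)⌉ : ℝ) + (σ n : ℝ) + y (n + 1) :=
      bm_rhs_ge _ n (σ n)
    have hT0 : (0 : ℝ) ≤ (T : ℝ) ^ (n + 1) := by positivity
    calc (T : ℝ) = ((T : ℝ) ^ (n + 1)) ^ (((n + 1 : ℕ) : ℝ))⁻¹ :=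
          (Real.pow_rpow_inv_natCast (by positivity) (Nat.succ_ne_zero n)).symm
      _ ≤ _ := by
          rw [bmA_succ]
          exact Real.rpow_le_rpow hT0 (le_trans hTn hR) (by positivity)

lemma bmA_nonneg (hT : 1 ≤ T) (n : ℕ) : (0 : ℝ) ≤ bmA y T σ n :=
  le_trans (by exact_mod_cast Nat.zero_le T) (bmA_ge_T hT n)

lemma bmA_pow_succ (hT : 1 ≤ T) (n : ℕ) :
    (bmA y T σ (n + 1)) ^ (n + 1) =
      (⌈(bmA y T σ n) ^ (n + 1) - y (n + 1)⌉ : ℝ) + (σ n : ℝ) + y (n + 1) := by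
  have hx0 : (0 : ℝ) ≤ bmA y T σ n := bmA_nonneg hT n
  have hR0 : (0 : ℝ) ≤ (⌈(bmA y T σ n) ^ (n + 1) - y (n + 1)⌉ : ℝ) + (σ n : ℝ) + y (n + 1) :=
    le_trans (by positivity) (bm_rhs_ge _ n (σ n))
  rw [bmA_succ]
  exact Real.rpow_inv_natCast_pow hR0 (Nat.succ_ne_zero n)

lemma bmA_mono_succ (hT : 1 ≤ T) (n : ℕ) : bmA y T σ n ≤ bmA y T σ (n + 1) := by
  refine le_of_pow_le_pow_left₀ (show n + 1 ≠ 0 by omega) (bmA_nonneg hT (n + 1)) ?_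
  rw [bmA_pow_succ hT n]
  exact bm_rhs_ge _ n (σ n)

lemma bmA_mono (hT : 1 ≤ T) {m n : ℕ} (h : m ≤ n) : bmA y T σ m ≤ bmA y T σ n := by
  induction n with
  | zero => simp_all
  | succ n ih =>
    rcases Nat.lt_or_ge m (n + 1) with h' | h'
    · exact le_trans (ih (Nat.lt_succ_iff.mp h')) (bmA_mono_succ hT n)
    · have : m = n + 1 := le_antisymm h h'
      simp [this]

lemma bmB_pow (hT : 1 ≤ T) (he0 : 0 ≤ e) (n : ℕ) :
    (bmB y e T σ (n + 1)) ^ (n + 1) = (bmA y T σ (n + 1)) ^ (n + 1) + e := by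
  have hx0 : (0 : ℝ) ≤ bmA y T σ (n + 1) := bmA_nonneg hT (n + 1)
  have h0 : (0 : ℝ) ≤ (bmA y T σ (n + 1)) ^ (n + 1) + e := by positivity
  exact Real.rpow_inv_natCast_pow h0 (Nat.succ_ne_zero n)

lemma bmB_nonneg (hT : 1 ≤ T) (he0 : 0 ≤ e) (n : ℕ) : (0 : ℝ) ≤ bmB y e T σ n := by
  have := bmA_nonneg (σ := σ) (y := y) hT n
  exact Real.rpow_nonneg (by positivity) _

lemma bmA_le_bmB (hT : 1 ≤ T) (he0 : 0 ≤ e) (n : ℕ) :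
    bmA y T σ (n + 1) ≤ bmB y e T σ (n + 1) := by
  refine le_of_pow_le_pow_left₀ (show n + 1 ≠ 0 by omega) (bmB_nonneg hT he0 (n + 1)) ?_
  rw [bmB_pow hT he0 n]
  linarith

/-- Nesting of right endpoints. -/
lemma bmB_anti_succ (hT : 1 ≤ T) (he0 : 0 ≤ e) (he1 : e ≤ 1) (hσ : ∀ k, σ k < N)
    (hNT : (N : ℝ) + 2 ≤ e * T) (n : ℕ) :
    bmB y e T σ (n + 2) ≤ bmB y e T σ (n + 1) := by
  set a := bmA y T σ (n + 1) with ha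
  set b := bmB y e T σ (n + 1) with hb
  have ha0 : (0 : ℝ) ≤ a := bmA_nonneg hT (n + 1)
  have haT : (T : ℝ) ≤ a := bmA_ge_T hT (n + 1)
  have hab : a ≤ b := bmA_le_bmB hT he0 n
  have hb0 : (0 : ℝ) ≤ b := bmB_nonneg hT he0 (n + 1)
  have hbpow : b ^ (n + 1) = a ^ (n + 1) + e := bmB_pow hT he0 n
  refine le_of_pow_le_pow_left₀ (show n + 2 ≠ 0 by omega) hb0 ?_
  -- lower bound for b ^ (n+2)
  have hlow : a ^ (n + 2) + (T : ℝ) * e ≤ b ^ (n + 2) := by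
    have h1 : a * (a ^ (n + 1) + e) ≤ b * b ^ (n + 1) := by
      rw [hbpow]
      have h3 : (0 : ℝ) ≤ a ^ (n + 1) + e := by positivity
      exact mul_le_mul hab le_rfl h3 hb0
    have h2 : (T : ℝ) * e ≤ a * e := mul_le_mul_of_nonneg_right haT he0
    calc a ^ (n + 2) + (T : ℝ) * e ≤ a ^ (n + 2) + a * e := by linarith
      _ = a * (a ^ (n + 1) + e) := by ring
      _ ≤ b * b ^ (n + 1) := h1
      _ = b ^ (n + 2) := by ring
  -- upper bound for bmB (n+2) ^ (n+2)
  have hup : (bmB y e T σ (n + 2)) ^ (n + 2) ≤ a ^ (n + 2) + (N : ℝ) + e := by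
    rw [bmB_pow hT he0 (n + 1), bmA_pow_succ hT (n + 1)]
    have hceil : (⌈a ^ (n + 2) - y (n + 2)⌉ : ℝ) < a ^ (n + 2) - y (n + 2) + 1 :=
      Int.ceil_lt_add_one _
    have hd : (σ (n + 1) : ℝ) ≤ (N : ℝ) - 1 := by
      have := hσ (n + 1)
      have : (σ (n + 1) : ℝ) + 1 ≤ (N : ℝ) := by exact_mod_cast this
      linarith
    linarith
  have : (N : ℝ) + e ≤ (T : ℝ) * e := by nlinarith
  linarith

lemma bmB_anti (hT : 1 ≤ T) (he0 : 0 ≤ e) (he1 : e ≤ 1) (hσ : ∀ k, σ k < N)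
    (hNT : (N : ℝ) + 2 ≤ e * T) {m n : ℕ} (hm : 1 ≤ m) (h : m ≤ n) :
    bmB y e T σ n ≤ bmB y e T σ m := by
  induction n with
  | zero => omega
  | succ n ih =>
    rcases Nat.lt_or_ge m (n + 1) with h' | h'
    · have hn1 : 1 ≤ n := by omega
      obtain ⟨n', rfl⟩ : ∃ n', n = n' + 1 := ⟨n - 1, by omega⟩
      exact le_trans (bmB_anti_succ hT he0 he1 hσ hNT n') (ih (Nat.lt_succ_iff.mp h'))
    · have : m = n + 1 := le_antisymm h h'
      simp [this]

/-- The first-level right endpoint is at most `T + N + 2`. -/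
lemma bmB_one_le (hT : 1 ≤ T) (he0 : 0 ≤ e) (he1 : e ≤ 1) (hσ : ∀ k, σ k < N) :
    bmB y e T σ 1 ≤ (T : ℝ) + N + 2 := by
  have h1 : (bmB y e T σ 1) ^ 1 = (bmA y T σ 1) ^ 1 + e := bmB_pow hT he0 0
  have h2 : (bmA y T σ 1) ^ 1 =
      (⌈(bmA y T σ 0) ^ 1 - y 1⌉ : ℝ) + (σ 0 : ℝ) + y 1 := bmA_pow_succ hT 0
  have hceil : (⌈(bmA y T σ 0) ^ 1 - y 1⌉ : ℝ) < (bmA y T σ 0) ^ 1 - y 1 + 1 :=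
    Int.ceil_lt_add_one _
  have hA0 : bmA y T σ 0 = (T : ℝ) := rfl
  have hd : (σ 0 : ℝ) ≤ (N : ℝ) - 1 := by
    have : (σ 0 : ℝ) + 1 ≤ (N : ℝ) := by exact_mod_cast hσ 0
    linarith
  have := h1
  rw [h2, hA0] at this
  simp only [pow_one] at this h1 ⊢
  nlinarith [this]

lemma bmA_le_W (hT : 1 ≤ T) (he0 : 0 ≤ e) (he1 : e ≤ 1) (hσ : ∀ k, σ k < N)
    (hNT : (N : ℝ) + 2 ≤ e * T) (n : ℕ) : bmA y T σ n ≤ (T : ℝ) + N + 2 := by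
  rcases n with _ | n
  · have h1 : (0:ℝ) ≤ (N:ℝ) := Nat.cast_nonneg N
    simp only [bmA_zero]
    linarith
  · calc bmA y T σ (n + 1) ≤ bmB y e T σ (n + 1) := bmA_le_bmB hT he0 n
      _ ≤ bmB y e T σ 1 := bmB_anti hT he0 he1 hσ hNT le_rfl (by omega)
      _ ≤ (T : ℝ) + N + 2 := bmB_one_le hT he0 he1 hσ

lemma bmH_ge (hT : 1 ≤ T) (he0 : 0 ≤ e) (he1 : e ≤ 1) (hσ : ∀ k, σ k < N)
    (hNT : (N : ℝ) + 2 ≤ e * T) (n : ℕ) : bmA y T σ n ≤ bmH y T σ :=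
  le_ciSup ⟨(T : ℝ) + N + 2, fun x ⟨m, hm⟩ => hm ▸ bmA_le_W hT he0 he1 hσ hNT m⟩ n

lemma bmH_le_B (hT : 1 ≤ T) (he0 : 0 ≤ e) (he1 : e ≤ 1) (hσ : ∀ k, σ k < N)
    (hNT : (N : ℝ) + 2 ≤ e * T) (n : ℕ) : bmH y T σ ≤ bmB y e T σ (n + 1) := by
  refine ciSup_le fun m => ?_
  rcases Nat.lt_or_ge m (n + 2) with h' | h'
  · exact le_trans (bmA_mono hT (by omega : m ≤ n + 1)) (bmA_le_bmB hT he0 n)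
  · obtain ⟨m', rfl⟩ : ∃ m', m = m' + 1 := ⟨m - 1, by omega⟩
    exact le_trans (bmA_le_bmB hT he0 m')
      (bmB_anti hT he0 he1 hσ hNT (by omega) (by omega))

lemma bmH_ge_T (hT : 1 ≤ T) (he0 : 0 ≤ e) (he1 : e ≤ 1) (hσ : ∀ k, σ k < N)
    (hNT : (N : ℝ) + 2 ≤ e * T) : (T : ℝ) ≤ bmH y T σ :=
  le_trans (bmA_ge_T hT 0) (bmH_ge hT he0 he1 hσ hNT 0)

lemma bmH_le_W (hT : 1 ≤ T) (he0 : 0 ≤ e) (he1 : e ≤ 1) (hσ : ∀ k, σ k < N)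
    (hNT : (N : ℝ) + 2 ≤ e * T) : bmH y T σ ≤ (T : ℝ) + N + 2 :=
  le_trans (bmH_le_B hT he0 he1 hσ hNT 0) (bmB_one_le hT he0 he1 hσ)

/-- The powers of the limit point lie in the prescribed intervals. -/
lemma bmH_pow_mem (hT : 1 ≤ T) (he0 : 0 ≤ e) (he1 : e ≤ 1) (hσ : ∀ k, σ k < N)
    (hNT : (N : ℝ) + 2 ≤ e * T) (n : ℕ) :
    (bmA y T σ (n + 1)) ^ (n + 1) ≤ (bmH y T σ) ^ (n + 1) ∧
      (bmH y T σ) ^ (n + 1) ≤ (bmA y T σ (n + 1)) ^ (n + 1) + e := by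
  have h1 : bmA y T σ (n + 1) ≤ bmH y T σ := bmH_ge hT he0 he1 hσ hNT (n + 1)
  have h2 : bmH y T σ ≤ bmB y e T σ (n + 1) := bmH_le_B hT he0 he1 hσ hNT n
  have h0 : (0 : ℝ) ≤ bmA y T σ (n + 1) := bmA_nonneg hT (n + 1)
  constructor
  · gcongr
  · rw [← bmB_pow hT he0 n]
    gcongr
    linarith

/-- Membership of the limit point in the target set. -/
lemma bmH_mem (hT : 1 ≤ T) (he0 : 0 < e) (he1 : e ≤ 1/4) (hσ : ∀ k, σ k < N)
    (hNT : (N : ℝ) + 2 ≤ e * T) {ε : ℝ} (heε : e < ε) (hT2 : 2 ≤ T) :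
    1 < bmH y T σ ∧ ∀ n : ℕ, 1 ≤ n → distNearestInt ((bmH y T σ) ^ n - y n) < ε := by
  have he1' : e ≤ 1 := by linarith
  constructor
  · have := bmH_ge_T (y := y) hT he0.le he1' hσ hNT
    have h2 : (2 : ℝ) ≤ (T : ℝ) := by exact_mod_cast hT2
    linarith
  · intro n hn
    obtain ⟨m, rfl⟩ : ∃ m, n = m + 1 := ⟨n - 1, by omega⟩
    obtain ⟨hl, hr⟩ := bmH_pow_mem hT he0.le he1' hσ hNT m
    rw [bmA_pow_succ hT m] at hl hr
    set t := (bmH y T σ) ^ (m + 1) - y (m + 1) with htdef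
    set M : ℤ := ⌈(bmA y T σ m) ^ (m + 1) - y (m + 1)⌉ + (σ m : ℤ) with hM
    have hMl : (M : ℝ) ≤ t := by push_cast [hM]; simp only [htdef]; linarith
    have hMr : t ≤ (M : ℝ) + e := by push_cast [hM]; simp only [htdef]; linarith
    have hround : round t = M := by
      rw [round_eq]
      refine Int.floor_eq_iff.mpr ⟨by push_cast; linarith, by push_cast; linarith⟩
    rw [distNearestInt, hround]
    rw [abs_of_nonneg (by linarith)]
    linarith

/-- The limit points of digit strings that agree below `k` agree at level `k`. -/
lemma bmA_agree (hk : ∀ i, i < k → σ i = σ' i) : ∀ n, n ≤ k → bmA y T σ n = bmA y T σ' n := by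
  intro n hn
  induction n with
  | zero => rfl
  | succ n ih =>
    simp only [bmA_succ, ih (by omega), hk n (by omega)]

/-- Elementary gap estimate for powers. -/
lemma pow_gap {x z W : ℝ} (hx : 0 ≤ x) (hxz : x ≤ z) (hzW : z ≤ W) (k : ℕ) :
    z ^ (k + 1) - x ^ (k + 1) ≤ ((k : ℝ) + 1) * W ^ k * (z - x) := by
  induction k with
  | zero => simp
  | succ k ih =>
    have hW0 : (0 : ℝ) ≤ W := le_trans (le_trans hx hxz) hzW
    have hxW : x ≤ W := le_trans hxz hzW
    have hxk : x ^ (k + 1) ≤ W ^ (k + 1) := by gcongr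
    have hzk0 : (0 : ℝ) ≤ z ^ (k + 1) - x ^ (k + 1) := by
      have : x ^ (k + 1) ≤ z ^ (k + 1) := by gcongr
      linarith
    have key : z ^ (k + 2) - x ^ (k + 2) =
        z * (z ^ (k + 1) - x ^ (k + 1)) + x ^ (k + 1) * (z - x) := by ring
    have h1 : z * (z ^ (k + 1) - x ^ (k + 1)) ≤ W * (((k : ℝ) + 1) * W ^ k * (z - x)) := by
      have := mul_le_mul hzW ih hzk0 hW0
      exact this
    have h2 : x ^ (k + 1) * (z - x) ≤ W ^ (k + 1) * (z - x) :=
      mul_le_mul_of_nonneg_right hxk (by linarith)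
    rw [key]
    have : W * (((k : ℝ) + 1) * W ^ k * (z - x)) + W ^ (k + 1) * (z - x) =
        ((k : ℝ) + 2) * W ^ (k + 1) * (z - x) := by ring
    push_cast
    nlinarith [h1, h2]

/-- The separation estimate between limit points of digit strings first differing at `k`. -/
lemma bmH_gap (hT : 1 ≤ T) (he0 : 0 < e) (he1 : e ≤ 1/4) (hσ : ∀ k, σ k < N)
    (hσ' : ∀ k, σ' k < N) (hNT : (N : ℝ) + 2 ≤ e * T) {k : ℕ}
    (hagree : ∀ i, i < k → σ i = σ' i) (hlt : σ k < σ' k) :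
    ((σ' k : ℝ) - σ k) / (2 * ((k : ℝ) + 1) * ((T : ℝ) + N + 2) ^ k)
      ≤ bmH y T σ' - bmH y T σ := by
  have he1' : e ≤ 1 := by linarith
  set x := bmH y T σ with hx
  set z := bmH y T σ' with hz
  set W : ℝ := (T : ℝ) + N + 2 with hW
  set D : ℝ := (σ' k : ℝ) - σ k with hD
  have hD1 : 1 ≤ D := by
    have : (σ k : ℝ) + 1 ≤ (σ' k : ℝ) := by exact_mod_cast hlt
    simp only [hD]; linarith
  -- the (k+1)-th powers are separated by at least D/2
  have hsep : D / 2 ≤ z ^ (k + 1) - x ^ (k + 1) := by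
    have hxu : x ^ (k + 1) ≤ (bmA y T σ (k + 1)) ^ (k + 1) + e :=
      (bmH_pow_mem hT he0.le he1' hσ hNT k).2
    have hzl : (bmA y T σ' (k + 1)) ^ (k + 1) ≤ z ^ (k + 1) :=
      (bmH_pow_mem hT he0.le he1' hσ' hNT k).1
    rw [bmA_pow_succ hT k] at hxu hzl
    have hAk : bmA y T σ k = bmA y T σ' k := bmA_agree hagree k le_rfl
    rw [hAk] at hxu
    have : D - e ≤ z ^ (k + 1) - x ^ (k + 1) := by
      have hcast : (σ' k : ℝ) - (σ k : ℝ) = D := rfl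
      linarith
    linarith
  have hx0 : (0 : ℝ) ≤ x := le_trans (by positivity) (bmH_ge_T hT he0.le he1' hσ hNT)
  have hxz : x ≤ z := by
    by_contra hcon
    push_neg at hcon
    have hz0 : (0 : ℝ) ≤ z := le_trans (by positivity) (bmH_ge_T hT he0.le he1' hσ' hNT)
    have : z ^ (k + 1) ≤ x ^ (k + 1) := by gcongr
    have hD0 : 0 < D / 2 := by linarith
    linarith
  have hzW : z ≤ W := bmH_le_W hT he0.le he1' hσ' hNT
  have hgap := pow_gap hx0 hxz hzW k
  have hW0 : (0 : ℝ) < W := by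
    have : (0:ℝ) ≤ (T:ℝ) := by positivity
    have : (0:ℝ) ≤ (N:ℝ) := by positivity
    simp only [hW]; linarith
  have hden : (0 : ℝ) < 2 * ((k : ℝ) + 1) * W ^ k := by positivity
  rw [div_le_iff₀ hden]
  nlinarith [hgap, hsep]

end construction

/-! ## Base-`N` expansion facts -/

section pfacts

variable {N : ℕ} {σ σ' : ℕ → ℕ} {t : ℝ}

lemma bmP_term_le (hN : 2 ≤ N) (hσ : ∀ k, σ k < N) (k : ℕ) :
    (σ k : ℝ) / (N : ℝ) ^ (k + 1) ≤ ((N : ℝ)⁻¹) ^ k := by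
  have hN0 : (0 : ℝ) < N := by exact_mod_cast (show 0 < N by omega)
  have h1 : (σ k : ℝ) ≤ N := le_of_lt (by exact_mod_cast hσ k)
  have h2 : (N : ℝ) / (N : ℝ) ^ (k + 1) = ((N : ℝ)⁻¹) ^ k := by
    rw [inv_pow, pow_succ]
    field_simp
  calc (σ k : ℝ) / (N : ℝ) ^ (k + 1) ≤ (N : ℝ) / (N : ℝ) ^ (k + 1) := by gcongr
    _ = ((N : ℝ)⁻¹) ^ k := h2

lemma bm_q_lt_one (hN : 2 ≤ N) : (N : ℝ)⁻¹ < 1 := by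
  have h1 : (1 : ℝ) < N := by exact_mod_cast lt_of_lt_of_le Nat.one_lt_two hN
  exact inv_lt_one_of_one_lt₀ h1

lemma bmP_summable (hN : 2 ≤ N) (hσ : ∀ k, σ k < N) :
    Summable (fun k => (σ k : ℝ) / (N : ℝ) ^ (k + 1)) := by
  refine Summable.of_nonneg_of_le (fun k => by positivity) (bmP_term_le hN hσ) ?_
  exact summable_geometric_of_lt_one (by positivity) (bm_q_lt_one hN)

lemma bmP_tail_le (hN : 2 ≤ N) (hσ : ∀ k, σ k < N) (n : ℕ) :
    ∑' k, (σ (k + n) : ℝ) / (N : ℝ) ^ ((k + n) + 1) ≤ 2 * ((N : ℝ)⁻¹) ^ n := by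
  have hN0 : (0 : ℝ) < N := by exact_mod_cast (show 0 < N by omega)
  have hq0 : (0 : ℝ) ≤ (N : ℝ)⁻¹ := by positivity
  have hq1 := bm_q_lt_one hN
  have hsum1 : Summable (fun k => (σ (k + n) : ℝ) / (N : ℝ) ^ ((k + n) + 1)) :=
    (summable_nat_add_iff (f := fun j => (σ j : ℝ) / (N : ℝ) ^ (j + 1)) n).mpr (bmP_summable hN hσ)
  have hsum2 : Summable (fun k : ℕ => ((N : ℝ)⁻¹) ^ (k + n)) := by
    exact (summable_nat_add_iff (f := fun j => ((N : ℝ)⁻¹) ^ j) n).mpr (summable_geometric_of_lt_one hq0 hq1)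
  have hle : ∀ k, (σ (k + n) : ℝ) / (N : ℝ) ^ ((k + n) + 1) ≤ ((N : ℝ)⁻¹) ^ (k + n) :=
    fun k => bmP_term_le hN hσ (k + n)
  calc ∑' k, (σ (k + n) : ℝ) / (N : ℝ) ^ ((k + n) + 1)
      ≤ ∑' k : ℕ, ((N : ℝ)⁻¹) ^ (k + n) := Summable.tsum_le_tsum hle hsum1 hsum2
    _ = ∑' k : ℕ, ((N : ℝ)⁻¹) ^ n * ((N : ℝ)⁻¹) ^ k := by
        congr 1; funext k; rw [pow_add]; ring
    _ = ((N : ℝ)⁻¹) ^ n * (1 - (N : ℝ)⁻¹)⁻¹ := by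
        rw [tsum_mul_left, tsum_geometric_of_lt_one hq0 hq1]
    _ ≤ 2 * ((N : ℝ)⁻¹) ^ n := by
        rw [mul_comm]
        have h2 : (2 : ℝ) ≤ N := by exact_mod_cast hN
        have h3 : (N : ℝ)⁻¹ ≤ 2⁻¹ := by
          apply inv_anti₀ <;> norm_num [h2]
        have h4 : (0:ℝ) < 1 - (N : ℝ)⁻¹ := by linarith [bm_q_lt_one hN]
        have h5 : (1 - (N : ℝ)⁻¹)⁻¹ ≤ 2 := by
          rw [inv_le_iff_one_le_mul₀ h4]
          linarith
        gcongr

end pfacts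

section pfacts2

variable {N : ℕ} {σ σ' : ℕ → ℕ} {t : ℝ}

lemma bmP_split (hN : 2 ≤ N) (hσ : ∀ k, σ k < N) (n : ℕ) :
    bmP N σ = (∑ i ∈ Finset.range n, (σ i : ℝ) / (N : ℝ) ^ (i + 1)) +
      ∑' k, (σ (k + n) : ℝ) / (N : ℝ) ^ ((k + n) + 1) :=
  (Summable.sum_add_tsum_nat_add n (bmP_summable hN hσ)).symm

lemma bmP_diff (hN : 2 ≤ N) (hσ : ∀ k, σ k < N) (hσ' : ∀ k, σ' k < N) {k : ℕ}
    (hagree : ∀ i, i < k → σ i = σ' i) :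
    |bmP N σ' - bmP N σ| ≤ (|(σ' k : ℝ) - (σ k : ℝ)| + 2) / (N : ℝ) ^ (k + 1) := by
  have hN0 : (0 : ℝ) < N := by exact_mod_cast (show 0 < N by omega)
  have h1 := bmP_split hN hσ (k + 1)
  have h2 := bmP_split hN hσ' (k + 1)
  set tl := ∑' j, (σ (j + (k + 1)) : ℝ) / (N : ℝ) ^ ((j + (k + 1)) + 1) with htl
  set tl' := ∑' j, (σ' (j + (k + 1)) : ℝ) / (N : ℝ) ^ ((j + (k + 1)) + 1) with htl'
  have htl0 : 0 ≤ tl := tsum_nonneg fun j => by positivity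
  have htl0' : 0 ≤ tl' := tsum_nonneg fun j => by positivity
  have hq : 2 * ((N : ℝ)⁻¹) ^ (k + 1) = 2 / (N : ℝ) ^ (k + 1) := by
    rw [inv_pow]; ring
  have htlu : tl ≤ 2 / (N : ℝ) ^ (k + 1) := by rw [← hq]; exact bmP_tail_le hN hσ (k + 1)
  have htlu' : tl' ≤ 2 / (N : ℝ) ^ (k + 1) := by rw [← hq]; exact bmP_tail_le hN hσ' (k + 1)
  have hsum : (∑ i ∈ Finset.range (k + 1), (σ' i : ℝ) / (N : ℝ) ^ (i + 1)) -
      (∑ i ∈ Finset.range (k + 1), (σ i : ℝ) / (N : ℝ) ^ (i + 1)) =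
      ((σ' k : ℝ) - (σ k : ℝ)) / (N : ℝ) ^ (k + 1) := by
    rw [Finset.sum_range_succ, Finset.sum_range_succ]
    have : ∀ i ∈ Finset.range k, (σ' i : ℝ) / (N : ℝ) ^ (i + 1) =
        (σ i : ℝ) / (N : ℝ) ^ (i + 1) := by
      intro i hi
      rw [hagree i (Finset.mem_range.mp hi)]
    rw [Finset.sum_congr rfl this]
    ring
  have hdiff : bmP N σ' - bmP N σ = ((σ' k : ℝ) - (σ k : ℝ)) / (N : ℝ) ^ (k + 1) + (tl' - tl) := by
    rw [h1, h2, ← hsum]; ring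
  rw [hdiff]
  have habs : |((σ' k : ℝ) - (σ k : ℝ)) / (N : ℝ) ^ (k + 1)| =
      |(σ' k : ℝ) - (σ k : ℝ)| / (N : ℝ) ^ (k + 1) := by
    rw [abs_div, abs_of_pos (by positivity : (0:ℝ) < (N : ℝ) ^ (k + 1))]
  calc |((σ' k : ℝ) - (σ k : ℝ)) / (N : ℝ) ^ (k + 1) + (tl' - tl)|
      ≤ |((σ' k : ℝ) - (σ k : ℝ)) / (N : ℝ) ^ (k + 1)| + |tl' - tl| := abs_add_le _ _
    _ ≤ |(σ' k : ℝ) - (σ k : ℝ)| / (N : ℝ) ^ (k + 1) + 2 / (N : ℝ) ^ (k + 1) := by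
        rw [habs]
        have : |tl' - tl| ≤ 2 / (N : ℝ) ^ (k + 1) := by
          rw [abs_sub_le_iff]
          constructor <;> linarith
        linarith
    _ = (|(σ' k : ℝ) - (σ k : ℝ)| + 2) / (N : ℝ) ^ (k + 1) := by ring

end pfacts2

/-! ## Digit expansions: surjectivity onto `[0,1]` -/

/-- Remainders of the greedy base-`N` expansion. -/
noncomputable def bmRem (N : ℕ) (t : ℝ) : ℕ → ℝ
  | 0 => t
  | n + 1 => bmRem N t n -
      (min (N - 1) ⌊bmRem N t n * (N : ℝ) ^ (n + 1)⌋₊ : ℕ) / (N : ℝ) ^ (n + 1)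

/-- Digits of the greedy base-`N` expansion. -/
noncomputable def bmDig (N : ℕ) (t : ℝ) (n : ℕ) : ℕ :=
  min (N - 1) ⌊bmRem N t n * (N : ℝ) ^ (n + 1)⌋₊

lemma bmDig_lt (hN : 2 ≤ N) (t : ℝ) (n : ℕ) : bmDig N t n < N :=
  lt_of_le_of_lt (min_le_left _ _) (by omega)

lemma bmRem_invariant (hN : 2 ≤ N) (ht0 : 0 ≤ t) (ht1 : t ≤ 1) :
    ∀ n, 0 ≤ bmRem N t n ∧ bmRem N t n * (N : ℝ) ^ n ≤ 1 := by
  have hN0 : (0 : ℝ) < N := by exact_mod_cast (show 0 < N by omega)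
  intro n
  induction n with
  | zero => simpa [bmRem] using ⟨ht0, ht1⟩
  | succ n ih =>
    obtain ⟨h0, h1⟩ := ih
    set R := bmRem N t n with hR
    set u := R * (N : ℝ) ^ (n + 1) with hu
    have hu0 : 0 ≤ u := by positivity
    have huN : u ≤ N := by
      have : R * (N : ℝ) ^ n * N ≤ 1 * N := by
        apply mul_le_mul_of_nonneg_right h1 (le_of_lt hN0)
      calc u = R * (N : ℝ) ^ n * N := by rw [hu, pow_succ]; ring
        _ ≤ 1 * N := this
        _ = N := one_mul _
    set d : ℕ := min (N - 1) ⌊u⌋₊ with hd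
    have hdu : (d : ℝ) ≤ u := by
      calc (d : ℝ) ≤ (⌊u⌋₊ : ℝ) := by exact_mod_cast min_le_right _ _
        _ ≤ u := Nat.floor_le hu0
    have hud : u - 1 ≤ d := by
      rcases le_or_gt (⌊u⌋₊) (N - 1) with h | h
      · have hdeq : d = ⌊u⌋₊ := min_eq_right h
        have := Nat.lt_floor_add_one u
        rw [hdeq]
        linarith
      · have hdeq : d = N - 1 := min_eq_left (le_of_lt h)
        have hcast : (d : ℝ) = (N : ℝ) - 1 := by
          rw [hdeq]
          push_cast [Nat.cast_sub (show 1 ≤ N by omega)]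
          ring
        rw [hcast]
        linarith
    have hrem : bmRem N t (n + 1) = (u - d) / (N : ℝ) ^ (n + 1) := by
      show R - (d : ℝ) / (N : ℝ) ^ (n + 1) = _
      rw [hu]
      field_simp
    constructor
    · rw [hrem]
      apply div_nonneg (by linarith) (by positivity)
    · rw [hrem]
      have hpow : (0 : ℝ) < (N : ℝ) ^ (n + 1) := by positivity
      rw [div_mul_cancel₀ _ (ne_of_gt hpow)]
      linarith

lemma bmRem_partial (N : ℕ) (t : ℝ) :
    ∀ n, ∑ i ∈ Finset.range n, (bmDig N t i : ℝ) / (N : ℝ) ^ (i + 1) = t - bmRem N t n := by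
  intro n
  induction n with
  | zero => simp [bmRem]
  | succ n ih =>
    rw [Finset.sum_range_succ, ih]
    show _ = t - (bmRem N t n - (bmDig N t n : ℕ) / (N : ℝ) ^ (n + 1))
    push_cast
    ring

lemma bmP_bmDig (hN : 2 ≤ N) (ht0 : 0 ≤ t) (ht1 : t ≤ 1) : bmP N (bmDig N t) = t := by
  have hN0 : (0 : ℝ) < N := by exact_mod_cast (show 0 < N by omega)
  have hsum := bmP_summable hN (bmDig_lt hN t)
  have htend1 : Tendsto (fun n => ∑ i ∈ Finset.range n, (bmDig N t i : ℝ) / (N : ℝ) ^ (i + 1))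
      atTop (nhds (bmP N (bmDig N t))) := hsum.hasSum.tendsto_sum_nat
  have hrem0 : Tendsto (fun n => bmRem N t n) atTop (nhds 0) := by
    have hq0 : (0 : ℝ) ≤ (N : ℝ)⁻¹ := by positivity
    have hq1 := bm_q_lt_one hN
    have hgeo : Tendsto (fun n : ℕ => ((N : ℝ)⁻¹) ^ n) atTop (nhds 0) :=
      tendsto_pow_atTop_nhds_zero_of_lt_one hq0 hq1
    refine squeeze_zero (fun n => (bmRem_invariant hN ht0 ht1 n).1) (fun n => ?_) hgeo
    obtain ⟨h0, h1⟩ := bmRem_invariant hN ht0 ht1 n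
    have hpow : (0 : ℝ) < (N : ℝ) ^ n := by positivity
    calc bmRem N t n ≤ 1 / (N : ℝ) ^ n := (le_div_iff₀ hpow).mpr (by linarith)
      _ = ((N : ℝ)⁻¹) ^ n := by rw [inv_pow, one_div]
  have htend2 : Tendsto (fun n => t - bmRem N t n) atTop (nhds t) := by
    have h := (tendsto_const_nhds (x := t) (f := atTop)).sub hrem0
    simpa using h
  have heq : (fun n => ∑ i ∈ Finset.range n, (bmDig N t i : ℝ) / (N : ℝ) ^ (i + 1)) =
      fun n => t - bmRem N t n := funext (bmRem_partial N t)
  rw [heq] at htend1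
  exact tendsto_nhds_unique htend1 htend2


/-! ## The Hölder estimate -/

section holder

variable {y : ℕ → ℝ} {e : ℝ} {T N : ℕ} {σ σ' : ℕ → ℕ}

lemma bm_holder_aux (hT : 1 ≤ T) (he0 : 0 < e) (he1 : e ≤ 1/4) (hN : 2 ≤ N)
    (hσ : ∀ k, σ k < N) (hσ' : ∀ k, σ' k < N) (hNT : (N : ℝ) + 2 ≤ e * T)
    {r : ℝ} (hr0 : 0 < r) (hr1 : r ≤ 1)
    (hW : 2 * ((T : ℝ) + N + 2) ^ r ≤ N) {k : ℕ}
    (hagree : ∀ i, i < k → σ i = σ' i) (hlt : σ k < σ' k) :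
    0 < bmH y T σ' - bmH y T σ ∧
      |bmP N σ' - bmP N σ| ≤ 6 * (bmH y T σ' - bmH y T σ) ^ r := by
  have hN0 : (0 : ℝ) < N := by exact_mod_cast (show 0 < N by omega)
  set W : ℝ := (T : ℝ) + N + 2 with hWdef
  have hW1 : (1 : ℝ) ≤ W := by
    have h1 : (1:ℝ) ≤ (T:ℝ) := by exact_mod_cast hT
    have h2 : (0:ℝ) ≤ (N:ℝ) := Nat.cast_nonneg N
    simp only [hWdef]; linarith
  have hW0 : (0 : ℝ) < W := lt_of_lt_of_le one_pos hW1
  set G : ℝ := 2 * ((k : ℝ) + 1) * W ^ k with hGdef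
  have hG0 : (0 : ℝ) < G := by positivity
  set D : ℝ := (σ' k : ℝ) - (σ k : ℝ) with hDdef
  have hD1 : (1 : ℝ) ≤ D := by
    have : (σ k : ℝ) + 1 ≤ (σ' k : ℝ) := by exact_mod_cast hlt
    simp only [hDdef]; linarith
  have hD0 : (0 : ℝ) < D := lt_of_lt_of_le one_pos hD1
  have hDN : D ≤ N := by
    have h1 : (σ' k : ℝ) ≤ (N : ℝ) := le_of_lt (by exact_mod_cast hσ' k)
    have h2 : (0:ℝ) ≤ (σ k : ℝ) := Nat.cast_nonneg _
    simp only [hDdef]; linarith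
  have hgap : D / G ≤ bmH y T σ' - bmH y T σ := by
    have := bmH_gap (y := y) hT he0 he1 hσ hσ' hNT hagree hlt
    simpa [hDdef, hGdef, hWdef] using this
  have hpos : 0 < bmH y T σ' - bmH y T σ := lt_of_lt_of_le (by positivity) hgap
  refine ⟨hpos, ?_⟩
  -- the p-difference bound
  have hpd : |bmP N σ' - bmP N σ| ≤ (D + 2) / (N : ℝ) ^ (k + 1) := by
    have h := bmP_diff hN hσ hσ' hagree
    rwa [show |(σ' k : ℝ) - (σ k : ℝ)| = D by rw [← hDdef]; exact abs_of_pos hD0] at h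
  -- bound G ^ r
  have hGr0 : (0 : ℝ) < G ^ r := Real.rpow_pos_of_pos hG0 r
  have hGrle : G ^ r ≤ 2 * (N : ℝ) ^ k := by
    have hsplit : G ^ r = (2 * ((k : ℝ) + 1)) ^ r * (W ^ k) ^ r := by
      rw [hGdef, Real.mul_rpow (by positivity) (by positivity)]
    have h1 : (2 * ((k : ℝ) + 1)) ^ r ≤ 2 * ((k : ℝ) + 1) := by
      have h0k : (0:ℝ) ≤ (k:ℝ) := Nat.cast_nonneg k
      have hone : (1:ℝ) ≤ 2 * ((k : ℝ) + 1) := by linarith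
      calc (2 * ((k : ℝ) + 1)) ^ r ≤ (2 * ((k : ℝ) + 1)) ^ (1:ℝ) :=
            Real.rpow_le_rpow_of_exponent_le hone hr1
        _ = 2 * ((k : ℝ) + 1) := Real.rpow_one _
    have h2 : (W ^ k) ^ r = (W ^ r) ^ k := by
      rw [← Real.rpow_natCast W k, ← Real.rpow_natCast (W ^ r) k,
        ← Real.rpow_mul hW0.le, ← Real.rpow_mul hW0.le, mul_comm]
    have h3 : (W ^ r) ^ k ≤ ((N : ℝ) / 2) ^ k := by
      have hWr : W ^ r ≤ (N : ℝ) / 2 := by linarith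
      have hWr0 : (0:ℝ) ≤ W ^ r := Real.rpow_nonneg hW0.le r
      gcongr
    have h4 : ((k : ℝ) + 1) ≤ 2 ^ k := by
      have := Nat.lt_two_pow_self (n := k)
      exact_mod_cast this
    have h5 : (0:ℝ) ≤ (W ^ k) ^ r := Real.rpow_nonneg (by positivity) r
    calc G ^ r = (2 * ((k : ℝ) + 1)) ^ r * (W ^ k) ^ r := hsplit
      _ ≤ (2 * ((k : ℝ) + 1)) * ((N : ℝ) / 2) ^ k := by
          have h5' : (0:ℝ) ≤ (W ^ r) ^ k := by positivity
          rw [h2]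
          exact mul_le_mul h1 h3 h5' (by positivity)
      _ ≤ (2 * (2:ℝ) ^ k) * ((N : ℝ) / 2) ^ k := by
          have hp : (0:ℝ) ≤ ((N : ℝ) / 2) ^ k := by positivity
          nlinarith [h4, hp]
      _ = 2 * ((N : ℝ)) ^ k := by
          have hNN : 2 * ((N : ℝ) / 2) = (N : ℝ) := by ring
          rw [mul_assoc, ← mul_pow, hNN]
  -- bound D by D ^ r
  have hDr0 : (0:ℝ) ≤ D ^ r := Real.rpow_nonneg hD0.le r
  have hDle : D ≤ D ^ r * (N : ℝ) ^ ((1:ℝ) - r) := by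
    have h1 : D = D ^ r * D ^ ((1:ℝ) - r) := by
      rw [← Real.rpow_add hD0, show r + (1 - r) = (1:ℝ) by ring, Real.rpow_one]
    have h2 : D ^ ((1:ℝ) - r) ≤ (N : ℝ) ^ ((1:ℝ) - r) :=
      Real.rpow_le_rpow hD0.le hDN (by linarith)
    calc D = D ^ r * D ^ ((1:ℝ) - r) := h1
      _ ≤ D ^ r * (N : ℝ) ^ ((1:ℝ) - r) := mul_le_mul_of_nonneg_left h2 hDr0
  have hN1r : (N : ℝ) ^ ((1:ℝ) - r) ≤ (N : ℝ) := by
    have hone : (1:ℝ) ≤ (N : ℝ) := by exact_mod_cast (show 1 ≤ N by omega)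
    calc (N : ℝ) ^ ((1:ℝ) - r) ≤ (N : ℝ) ^ (1:ℝ) :=
          Real.rpow_le_rpow_of_exponent_le hone (by linarith)
      _ = (N : ℝ) := Real.rpow_one _
  -- the key product bound
  have hchain : D * G ^ r ≤ 2 * D ^ r * (N : ℝ) ^ (k + 1) := by
    have e1 : D * G ^ r ≤ (D ^ r * (N : ℝ) ^ ((1:ℝ) - r)) * (2 * (N : ℝ) ^ k) :=
      mul_le_mul hDle hGrle hGr0.le (by positivity)
    have e2 : (D ^ r * (N : ℝ) ^ ((1:ℝ) - r)) * (2 * (N : ℝ) ^ k) =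
        2 * D ^ r * ((N : ℝ) ^ ((1:ℝ) - r) * (N : ℝ) ^ k) := by ring
    have e3 : (N : ℝ) ^ ((1:ℝ) - r) * (N : ℝ) ^ k ≤ (N : ℝ) * (N : ℝ) ^ k :=
      mul_le_mul_of_nonneg_right hN1r (by positivity)
    have e4 : (N : ℝ) * (N : ℝ) ^ k = (N : ℝ) ^ (k + 1) := (pow_succ' _ _).symm
    have hDr2 : (0:ℝ) ≤ 2 * D ^ r := by positivity
    calc D * G ^ r ≤ (D ^ r * (N : ℝ) ^ ((1:ℝ) - r)) * (2 * (N : ℝ) ^ k) := e1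
      _ = 2 * D ^ r * ((N : ℝ) ^ ((1:ℝ) - r) * (N : ℝ) ^ k) := e2
      _ ≤ 2 * D ^ r * ((N : ℝ) * (N : ℝ) ^ k) := by
          exact mul_le_mul_of_nonneg_left e3 hDr2
      _ = 2 * D ^ r * (N : ℝ) ^ (k + 1) := by rw [e4]
  -- conclude
  have target : (D + 2) / (N : ℝ) ^ (k + 1) ≤ 6 * (D ^ r / G ^ r) := by
    rw [mul_div_assoc' 6 _ _, div_le_div_iff₀ (by positivity) hGr0]
    have hD3 : D + 2 ≤ 3 * D := by linarith
    nlinarith [hchain, hGr0.le, mul_le_mul_of_nonneg_right hD3 hGr0.le]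
  have hdiv : (D / G) ^ r = D ^ r / G ^ r := Real.div_rpow hD0.le hG0.le r
  have hfinal : (D / G) ^ r ≤ (bmH y T σ' - bmH y T σ) ^ r :=
    Real.rpow_le_rpow (by positivity) hgap hr0.le
  calc |bmP N σ' - bmP N σ| ≤ (D + 2) / (N : ℝ) ^ (k + 1) := hpd
    _ ≤ 6 * (D ^ r / G ^ r) := target
    _ = 6 * (D / G) ^ r := by rw [hdiv]
    _ ≤ 6 * (bmH y T σ' - bmH y T σ) ^ r := by linarith [hfinal]

lemma bm_holder (hT : 1 ≤ T) (he0 : 0 < e) (he1 : e ≤ 1/4) (hN : 2 ≤ N)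
    (hσ : ∀ k, σ k < N) (hσ' : ∀ k, σ' k < N) (hNT : (N : ℝ) + 2 ≤ e * T)
    {r : ℝ} (hr0 : 0 < r) (hr1 : r ≤ 1)
    (hW : 2 * ((T : ℝ) + N + 2) ^ r ≤ N) :
    |bmP N σ - bmP N σ'| ≤ 6 * |bmH y T σ - bmH y T σ'| ^ r := by
  by_cases h : ∀ k, σ k = σ' k
  · have : σ = σ' := funext h
    subst this
    simp [sub_self, abs_zero, Real.zero_rpow (ne_of_gt hr0)]
  · push_neg at h
    set k := Nat.find h with hk
    have hspec : σ k ≠ σ' k := Nat.find_spec h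
    have hmin : ∀ i, i < k → σ i = σ' i := fun i hi => not_not.mp (Nat.find_min h hi)
    rcases lt_or_gt_of_ne hspec with hlt | hgt
    · obtain ⟨hpos, hest⟩ := bm_holder_aux hT he0 he1 hN hσ hσ' hNT hr0 hr1 hW hmin hlt
      rw [abs_sub_comm (bmP N σ) _, abs_sub_comm (bmH y T σ) _,
        abs_of_pos hpos]
      exact hest
    · have hmin' : ∀ i, i < k → σ' i = σ i := fun i hi => (hmin i hi).symm
      obtain ⟨hpos, hest⟩ := bm_holder_aux hT he0 he1 hN hσ' hσ hNT hr0 hr1 hW hmin' hgt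
      rwa [abs_of_pos hpos]

end holder

/-! ## Putting it together -/

lemma bm_dim_ge (ε : ℝ) (hε : 0 < ε) (y : ℕ → ℝ) {r : ℝ≥0} (hr0 : 0 < r) (hr1 : (r : ℝ) < 1) :
    (r : ℝ≥0∞) ≤ dimH {x : ℝ | 1 < x ∧ ∀ n : ℕ, 1 ≤ n → distNearestInt (x ^ n - y n) < ε} := by
  classical
  set E := {x : ℝ | 1 < x ∧ ∀ n : ℕ, 1 ≤ n → distNearestInt (x ^ n - y n) < ε} with hE
  set e : ℝ := min ε 2⁻¹ / 2 with hedef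
  have he0 : 0 < e := by
    have : (0:ℝ) < min ε 2⁻¹ := lt_min hε (by norm_num)
    positivity
  have he1 : e ≤ 1/4 := by
    have : min ε 2⁻¹ ≤ 2⁻¹ := min_le_right _ _
    rw [hedef]; linarith
  have heε : e < ε := by
    have h1 : min ε 2⁻¹ ≤ ε := min_le_left _ _
    rw [hedef]; linarith
  have hr0' : (0:ℝ) < r := hr0
  -- choose T
  obtain ⟨T, hTa⟩ := exists_nat_ge (max (max (6 / e) ((8 / e) ^ ((1:ℝ) - (r:ℝ))⁻¹)) 2)
  have hT6 : 6 / e ≤ (T:ℝ) := le_trans (le_max_of_le_left (le_max_left _ _)) hTa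
  have hT8 : (8 / e) ^ ((1:ℝ) - (r:ℝ))⁻¹ ≤ (T:ℝ) :=
    le_trans (le_max_of_le_left (le_max_right _ _)) hTa
  have hT2r : (2:ℝ) ≤ (T:ℝ) := le_trans (le_max_right _ _) hTa
  have hT2 : 2 ≤ T := by exact_mod_cast hT2r
  have hT1 : 1 ≤ T := by omega
  have hT0 : (0:ℝ) < (T:ℝ) := by linarith
  have heT6 : 6 ≤ e * (T:ℝ) := by
    rw [div_le_iff₀ he0] at hT6
    linarith [hT6]
  -- choose N
  set N : ℕ := ⌊e * (T:ℝ)⌋₊ - 2 with hNdef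
  have heT0 : (0:ℝ) ≤ e * (T:ℝ) := by positivity
  have hfl : (⌊e * (T:ℝ)⌋₊ : ℝ) ≤ e * (T:ℝ) := Nat.floor_le heT0
  have hfl2 : e * (T:ℝ) < (⌊e * (T:ℝ)⌋₊ : ℝ) + 1 := Nat.lt_floor_add_one _
  have hfl6 : 6 ≤ ⌊e * (T:ℝ)⌋₊ := Nat.le_floor (by exact_mod_cast heT6)
  have hN2 : 2 ≤ N := by omega
  have hNcast : (N : ℝ) = (⌊e * (T:ℝ)⌋₊ : ℝ) - 2 := by
    rw [hNdef]
    push_cast [Nat.cast_sub (show 2 ≤ ⌊e * (T:ℝ)⌋₊ by omega)]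
    ring
  have hNT : (N : ℝ) + 2 ≤ e * (T:ℝ) := by rw [hNcast]; linarith
  have hNe : e * (T:ℝ) - 3 ≤ (N : ℝ) := by rw [hNcast]; linarith
  -- the Hölder exponent condition
  have hWcond : 2 * ((T : ℝ) + N + 2) ^ (r:ℝ) ≤ (N:ℝ) := by
    have hN0 : (0:ℝ) ≤ (N:ℝ) := Nat.cast_nonneg N
    have hWle : (T : ℝ) + N + 2 ≤ 2 * T := by
      have : e * (T:ℝ) ≤ (T:ℝ) := by nlinarith
      linarith
    have h8e0 : (0:ℝ) < 8 / e := by positivity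
    have hexp : (0:ℝ) < 1 - (r:ℝ) := by linarith
    have hpowid : ((8 / e) ^ ((1:ℝ) - (r:ℝ))⁻¹) ^ ((1:ℝ) - (r:ℝ)) = 8 / e :=
      Real.rpow_inv_rpow h8e0.le (ne_of_gt hexp)
    have hTr : 8 / e ≤ (T:ℝ) ^ ((1:ℝ) - (r:ℝ)) := by
      calc 8 / e = ((8 / e) ^ ((1:ℝ) - (r:ℝ))⁻¹) ^ ((1:ℝ) - (r:ℝ)) := hpowid.symm
        _ ≤ (T:ℝ) ^ ((1:ℝ) - (r:ℝ)) :=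
            Real.rpow_le_rpow (Real.rpow_nonneg h8e0.le _) hT8 hexp.le
    have hsplit : (T:ℝ) ^ ((1:ℝ) - (r:ℝ)) * (T:ℝ) ^ (r:ℝ) = (T:ℝ) := by
      rw [← Real.rpow_add hT0]
      norm_num
    have hTrpos : (0:ℝ) < (T:ℝ) ^ (r:ℝ) := Real.rpow_pos_of_pos hT0 _
    have h8T : 8 * (T:ℝ) ^ (r:ℝ) ≤ e * (T:ℝ) := by
      have := mul_le_mul_of_nonneg_right hTr hTrpos.le
      rw [hsplit] at this
      calc 8 * (T:ℝ) ^ (r:ℝ) = (8 / e) * (T:ℝ) ^ (r:ℝ) * e := by field_simp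
        _ ≤ (T:ℝ) * e := mul_le_mul_of_nonneg_right this he0.le
        _ = e * (T:ℝ) := mul_comm _ _
    have h2T : (2 * (T:ℝ)) ^ (r:ℝ) ≤ 2 * (T:ℝ) ^ (r:ℝ) := by
      rw [Real.mul_rpow (by norm_num) hT0.le]
      have : (2:ℝ) ^ (r:ℝ) ≤ 2 := by
        calc (2:ℝ) ^ (r:ℝ) ≤ (2:ℝ) ^ (1:ℝ) :=
              Real.rpow_le_rpow_of_exponent_le (by norm_num) hr1.le
          _ = 2 := Real.rpow_one _
      exact mul_le_mul_of_nonneg_right this hTrpos.le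
    have hWr : ((T : ℝ) + N + 2) ^ (r:ℝ) ≤ (2 * (T:ℝ)) ^ (r:ℝ) :=
      Real.rpow_le_rpow (by positivity) hWle (by positivity)
    calc 2 * ((T : ℝ) + N + 2) ^ (r:ℝ) ≤ 2 * (2 * (T:ℝ)) ^ (r:ℝ) := by linarith
      _ ≤ 4 * (T:ℝ) ^ (r:ℝ) := by linarith
      _ ≤ (e * (T:ℝ)) / 2 := by linarith
      _ ≤ e * (T:ℝ) - 3 := by linarith
      _ ≤ (N:ℝ) := hNe
  -- the Cantor set and the Hölder map
  set K := bmH y T '' {σ : ℕ → ℕ | ∀ k, σ k < N} with hK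
  set g : ℝ → ℝ := fun x =>
    if h : ∃ σ : ℕ → ℕ, (∀ k, σ k < N) ∧ bmH y T σ = x then bmP N h.choose else 0 with hgdef
  have hg : ∀ σ : ℕ → ℕ, (∀ k, σ k < N) → g (bmH y T σ) = bmP N σ := by
    intro σ hσb
    have hex : ∃ τ : ℕ → ℕ, (∀ k, τ k < N) ∧ bmH y T τ = bmH y T σ := ⟨σ, hσb, rfl⟩
    rw [hgdef]
    simp only [dif_pos hex]
    obtain ⟨hτb, hτh⟩ := hex.choose_spec
    have hdiff := bm_holder (y := y) (σ := hex.choose) (σ' := σ) hT1 he0 he1 hN2 hτb hσb hNT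
      hr0' hr1.le hWcond
    rw [hτh, sub_self, abs_zero, Real.zero_rpow (ne_of_gt hr0'), mul_zero] at hdiff
    have h0 : bmP N hex.choose - bmP N σ = 0 := abs_nonpos_iff.mp hdiff
    linarith [h0]
  have hKE : K ⊆ E := by
    rintro x ⟨σ, hσb, rfl⟩
    exact bmH_mem hT1 he0 he1 hσb hNT heε hT2
  have hIcc : Icc (0:ℝ) 1 ⊆ g '' K := by
    intro t ht
    refine ⟨bmH y T (bmDig N t), ⟨bmDig N t, fun k => bmDig_lt hN2 t k, rfl⟩, ?_⟩
    rw [hg _ (fun k => bmDig_lt hN2 t k)]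
    exact bmP_bmDig hN2 ht.1 ht.2
  have hHolder : HolderOnWith 6 r g K := by
    rintro x ⟨σ, hσb, rfl⟩ x' ⟨σ', hσb', rfl⟩
    simp only [hg σ hσb, hg σ' hσb']
    have hreal := bm_holder (y := y) (σ := σ) (σ' := σ') hT1 he0 he1 hN2 hσb hσb' hNT
      hr0' hr1.le hWcond
    rw [edist_dist, edist_dist, Real.dist_eq, Real.dist_eq]
    calc ENNReal.ofReal |bmP N σ - bmP N σ'|
        ≤ ENNReal.ofReal (6 * |bmH y T σ - bmH y T σ'| ^ (r:ℝ)) :=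
          ENNReal.ofReal_le_ofReal hreal
      _ = ENNReal.ofReal 6 * ENNReal.ofReal (|bmH y T σ - bmH y T σ'| ^ (r:ℝ)) :=
          ENNReal.ofReal_mul (by norm_num)
      _ = (6 : ℝ≥0) * ENNReal.ofReal |bmH y T σ - bmH y T σ'| ^ (r:ℝ) := by
          rw [ENNReal.ofReal_rpow_of_nonneg (abs_nonneg _) hr0'.le]
          norm_num
  -- dimension chain
  have hdim1 : dimH (Icc (0:ℝ) 1) = 1 := by
    rw [Real.dimH_of_nonempty_interior (s := Icc (0:ℝ) 1)]
    · simp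
    · rw [interior_Icc]
      exact ⟨1/2, by norm_num⟩
  have hchain : (1 : ℝ≥0∞) ≤ dimH (g '' K) := hdim1 ▸ dimH_mono hIcc
  have himg : dimH (g '' K) ≤ dimH K / r := hHolder.dimH_image_le hr0
  have hKr : (r : ℝ≥0∞) ≤ dimH K := by
    have h := le_trans hchain himg
    rw [ENNReal.le_div_iff_mul_le (Or.inl (by exact_mod_cast hr0.ne'))
      (Or.inl ENNReal.coe_ne_top)] at h
    simpa using h
  exact le_trans hKr (dimH_mono hKE)

theorem stmt15 (ε : ℝ) (hε : 0 < ε) (y : ℕ → ℝ) :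
    dimH {x : ℝ | 1 < x ∧ ∀ n : ℕ, 1 ≤ n → distNearestInt (x ^ n - y n) < ε} = 1 := by
  apply le_antisymm
  · exact le_trans (dimH_mono (subset_univ _)) (le_of_eq Real.dimH_univ)
  · by_contra hcon
    push_neg at hcon
    obtain ⟨r, hr1, hr2⟩ := ENNReal.lt_iff_exists_nnreal_btwn.mp hcon
    have hr0 : 0 < r := by
      rcases (zero_le : (0:ℝ≥0) ≤ r).eq_or_lt with h | h
      · exfalso
        rw [← h] at hr1
        simp at hr1
      · exact h
    have hr1' : (r : ℝ) < 1 := by exact_mod_cast ENNReal.coe_lt_one_iff.mp hr2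
    exact absurd (bm_dim_ge ε hε y hr0 hr1') (not_le.mpr hr1)
end
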